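/- Let H = {H_α}_{α∈π} be a finite type Hopf π-coalgebra, λ = (λ_α) a right π-integral for H, and Λ a left integral for H_1 with λ_1(Λ) = 1. Then for every α ∈ π and every k-linear endomorphism f of H_α, Tr(f) = λ_α(S_{α⁻¹}(Λ_{(2,α⁻¹)}) f(Λ_{(1,α)})), where Δ_{α,α⁻¹}(Λ) = Λ_{(1,α)} ⊗ Λ_{(2,α⁻¹)} (summation implicit) and Tr denotes the trace of k-linear endomorphisms. -/

import Mathlib

open TensorProduct

/-- The canonical `k`-linear isomorphism-as-map `H α →ₗ[k] H β` induced by an equality `α = β`. -/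
def Lcast (k : Type*) [CommSemiring k] {π : Type*} (H : π → Type*)
    [∀ α, AddCommMonoid (H α)] [∀ α, Module k (H α)] {α β : π} (h : α = β) :
    H α →ₗ[k] H β := by subst h; exact LinearMap.id

/-- A Hopf `π`-coalgebra over a field `k` (Turaev): a family of `k`-algebras `H α`
with comultiplication `Δ α β : H (α * β) →ₐ[k] H α ⊗[k] H β`, counit `ε : H 1 →ₐ[k] k`
and antipode `S α : H α →ₗ[k] H α⁻¹`, satisfying coassociativity, counit and
antipode axioms. -/
structure HopfGroupCoalgebra (k : Type*) [Field k] (π : Type*) [Group π]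
    (H : π → Type*) [∀ α, Ring (H α)] [∀ α, Algebra k (H α)] where
  Δ : ∀ α β : π, H (α * β) →ₐ[k] TensorProduct k (H α) (H β)
  ε : H (1 : π) →ₐ[k] k
  S : ∀ α : π, H α →ₗ[k] H α⁻¹
  coassoc : ∀ (α β γ : π) (x : H (α * β * γ)),
    (TensorProduct.assoc k (H α) (H β) (H γ))
        (TensorProduct.map (Δ α β).toLinearMap LinearMap.id (Δ (α * β) γ x)) =
      TensorProduct.map LinearMap.id (Δ β γ).toLinearMap
        (Δ α (β * γ) (Lcast k H (mul_assoc α β γ) x))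
  counit_right : ∀ (α : π) (x : H (α * 1)),
    (TensorProduct.rid k (H α))
        (TensorProduct.map LinearMap.id ε.toLinearMap (Δ α 1 x)) =
      Lcast k H (mul_one α) x
  counit_left : ∀ (α : π) (x : H (1 * α)),
    (TensorProduct.lid k (H α))
        (TensorProduct.map ε.toLinearMap LinearMap.id (Δ 1 α x)) =
      Lcast k H (one_mul α) x
  antipode_left : ∀ (α : π) (x : H (α⁻¹ * α)),
    (LinearMap.mul' k (H α))
        (TensorProduct.map ((Lcast k H (inv_inv α)).comp (S α⁻¹)) LinearMap.id (Δ α⁻¹ α x)) =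
      ε (Lcast k H (inv_mul_cancel α) x) • (1 : H α)
  antipode_right : ∀ (α : π) (x : H (α * α⁻¹)),
    (LinearMap.mul' k (H α))
        (TensorProduct.map LinearMap.id ((Lcast k H (inv_inv α)).comp (S α⁻¹)) (Δ α α⁻¹ x)) =
      ε (Lcast k H (mul_inv_cancel α) x) • (1 : H α)

set_option linter.unusedSectionVars false

section Aux

variable {k : Type*} [Field k] {π : Type*} [Group π] {H : π → Type*}
  [∀ α, Ring (H α)] [∀ α, Algebra k (H α)]

theorem Lcast_eq_id {α : π} (h : α = α) : Lcast k H h = LinearMap.id := rfl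

theorem Lcast_Lcast {α β γ : π} (h : α = β) (h' : β = γ) (x : H α) :
    Lcast k H h' (Lcast k H h x) = Lcast k H (h.trans h') x := by subst h h'; rfl

theorem Lcast_mul {α β : π} (h : α = β) (x y : H α) :
    Lcast k H h (x * y) = Lcast k H h x * Lcast k H h y := by subst h; rfl

variable (Hc : HopfGroupCoalgebra k π H)

theorem Dcast_left {β β' δ : π} (h : β = β') (hp : β * δ = β' * δ) (x : H (β * δ)) :
    Hc.Δ β' δ (Lcast k H hp x) = TensorProduct.map (Lcast k H h) LinearMap.id (Hc.Δ β δ x) := by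
  subst h
  simp only [Lcast_eq_id, TensorProduct.map_id]
  rfl

theorem Dcast_right {β δ δ' : π} (h : δ = δ') (hp : β * δ = β * δ') (x : H (β * δ)) :
    Hc.Δ β δ' (Lcast k H hp x) = TensorProduct.map LinearMap.id (Lcast k H h) (Hc.Δ β δ x) := by
  subst h
  simp only [Lcast_eq_id, TensorProduct.map_id]
  rfl

theorem lam_cast (lam : ∀ α : π, H α →ₗ[k] k) {α β : π} (h : α = β) (x : H α) :
    lam β (Lcast k H h x) = lam α x := by subst h; rfl

variable (lam : ∀ α : π, H α →ₗ[k] k) (Λ : H (1 : π)) (α : π)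

/-- The (cast of the) antipode `H α⁻¹ →ₗ[k] H α`. -/
noncomputable def TFS : H α⁻¹ →ₗ[k] H α := (Lcast k H (inv_inv α)).comp (Hc.S α⁻¹)

/-- `λ_1 ⊗ id` followed by scalar action. -/
noncomputable def TFlam1 : TensorProduct k (H (1 : π)) (H α) →ₗ[k] H α :=
  (TensorProduct.lid k (H α)).toLinearMap.comp (TensorProduct.map (lam 1) LinearMap.id)

@[simp] theorem TFlam1_tmul (a : H (1 : π)) (b : H α) :
    TFlam1 lam α (a ⊗ₜ[k] b) = lam 1 a • b := by
  simp [TFlam1]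

/-- The bilinear form `y ↦ λ_α (y * ·)` as a map to the dual. -/
noncomputable def TFB : H α →ₗ[k] Module.Dual k (H α) :=
  (LinearMap.llcomp k (H α) (H α) k (lam α)).comp (LinearMap.mul k (H α))

@[simp] theorem TFB_apply (y z : H α) : TFB lam α y z = lam α (y * z) := rfl

/-- The element `Δ_{α,α⁻¹}(Λ)`. -/
noncomputable def TFT : TensorProduct k (H α) (H α⁻¹) :=
  Hc.Δ α α⁻¹ (Lcast k H (mul_inv_cancel α).symm Λ)


/-- `V` composed with left multiplication by `t` on the first two factors. -/
noncomputable def TFVx (t : TensorProduct k (H (1 : π)) (H α)) :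
    TensorProduct k (TensorProduct k (H (1 : π)) (H α)) (H α⁻¹) →ₗ[k] H α :=
  (LinearMap.mul' k (H α)) ∘ₗ (TensorProduct.map (TFlam1 lam α) (TFS Hc α)) ∘ₗ
    (LinearMap.rTensor (H α⁻¹) (LinearMap.mulLeft k t))

@[simp] theorem TFVx_tmul (t p : TensorProduct k (H (1 : π)) (H α)) (q : H α⁻¹) :
    TFVx Hc lam α t (p ⊗ₜ[k] q) = TFlam1 lam α (t * p) * TFS Hc α q := by
  simp [TFVx]

/-- The auxiliary map `d ↦ (λ_1 ⊗ id)(t * (d ⊗ 1))`. -/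
noncomputable def TFK (t : TensorProduct k (H (1 : π)) (H α)) : H (1 : π) →ₗ[k] H α :=
  (TFlam1 lam α) ∘ₗ (LinearMap.mulLeft k t) ∘ₗ ((TensorProduct.mk k (H (1 : π)) (H α)).flip 1)

@[simp] theorem TFK_apply (t : TensorProduct k (H (1 : π)) (H α)) (d : H (1 : π)) :
    TFK lam α t d = TFlam1 lam α (t * (d ⊗ₜ[k] 1)) := rfl

theorem TFSC1 (t : TensorProduct k (H (1 : π)) (H α)) (d : H (1 : π)) (e : H α) :
    TFlam1 lam α (t * (d ⊗ₜ[k] e)) = TFlam1 lam α (t * (d ⊗ₜ[k] 1)) * e := by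
  induction t using TensorProduct.induction_on with
  | zero => simp
  | tmul y z => simp [Algebra.TensorProduct.tmul_mul_tmul, smul_mul_assoc]
  | add t₁ t₂ h₁ h₂ => simp [add_mul, h₁, h₂]

theorem TFSCV (t : TensorProduct k (H (1 : π)) (H α)) (d : H (1 : π))
    (w : TensorProduct k (H α) (H α⁻¹)) :
    TFVx Hc lam α t ((TensorProduct.assoc k (H (1 : π)) (H α) (H α⁻¹)).symm (d ⊗ₜ[k] w)) =
      TFK lam α t d *
        (LinearMap.mul' k (H α)) (TensorProduct.map LinearMap.id (TFS Hc α) w) := by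
  induction w using TensorProduct.induction_on with
  | zero => rw [tmul_zero, LinearEquiv.map_zero, LinearMap.map_zero, LinearMap.map_zero,
      LinearMap.map_zero, mul_zero]
  | tmul e₁ e₂ =>
      rw [assoc_symm_tmul, TFVx_tmul, TFSC1, TFK_apply, mul_assoc]
      simp
  | add w₁ w₂ h₁ h₂ => simp [tmul_add, h₁, h₂, mul_add]

theorem TFhmap1
    (hlam : ∀ (α β : π) (x : H (α * β)),
      (TensorProduct.lid k (H β))
          (TensorProduct.map (lam α) LinearMap.id (Hc.Δ α β x)) =
        lam (α * β) x • (1 : H β))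
    (x : H α) :
    (TensorProduct.lid k (H α)).toLinearMap ∘ₗ
        (TensorProduct.map (TFB lam α x) (TFS Hc α)) ∘ₗ
        (TensorProduct.map (Lcast k H (one_mul α)) LinearMap.id) =
      TFVx Hc lam α (Hc.Δ 1 α (Lcast k H (one_mul α).symm x)) ∘ₗ
        TensorProduct.map (Hc.Δ 1 α).toLinearMap LinearMap.id := by
  apply TensorProduct.ext'
  intro p q
  simp only [LinearMap.comp_apply, map_tmul, LinearMap.id_coe, id_eq,
    LinearEquiv.coe_toLinearMap, lid_tmul, TFB_apply, TFVx_tmul, AlgHom.toLinearMap_apply]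
  rw [← map_mul, show TFlam1 lam α ((Hc.Δ 1 α) (Lcast k H (one_mul α).symm x * p)) =
      lam (1 * α) (Lcast k H (one_mul α).symm x * p) • (1 : H α) from
    hlam 1 α (Lcast k H (one_mul α).symm x * p), smul_mul_assoc, one_mul ((TFS Hc α) q)]
  have h := lam_cast (H := H) lam (one_mul α) (Lcast k H (one_mul α).symm x * p)
  rw [Lcast_mul, Lcast_Lcast, Lcast_eq_id] at h
  simp only [LinearMap.id_coe, id_eq] at h
  rw [h]

theorem TFhmap2 (t : TensorProduct k (H (1 : π)) (H α)) :
    TFVx Hc lam α t ∘ₗ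
        (TensorProduct.assoc k (H (1 : π)) (H α) (H α⁻¹)).symm.toLinearMap ∘ₗ
        TensorProduct.map LinearMap.id (Hc.Δ α α⁻¹).toLinearMap =
      TFK lam α t ∘ₗ (TensorProduct.rid k (H (1 : π))).toLinearMap ∘ₗ
        TensorProduct.map LinearMap.id (Hc.ε.toLinearMap ∘ₗ Lcast k H (mul_inv_cancel α)) := by
  apply TensorProduct.ext'
  intro d₁ d₂
  simp only [LinearMap.comp_apply, map_tmul, LinearMap.id_coe, id_eq,
    LinearEquiv.coe_toLinearMap, AlgHom.toLinearMap_apply, rid_tmul]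
  rw [TFSCV]
  rw [show (LinearMap.mul' k (H α))
        (TensorProduct.map LinearMap.id (TFS Hc α) (Hc.Δ α α⁻¹ d₂)) =
      Hc.ε (Lcast k H (mul_inv_cancel α) d₂) • 1 from Hc.antipode_right α d₂]
  rw [mul_smul_comm, mul_one, map_smul]

theorem TFJ
    (hlam : ∀ (α β : π) (x : H (α * β)),
      (TensorProduct.lid k (H β))
          (TensorProduct.map (lam α) LinearMap.id (Hc.Δ α β x)) =
        lam (α * β) x • (1 : H β))
    (hΛ : ∀ x : H (1 : π), x * Λ = Hc.ε x • Λ)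
    (hnorm : lam 1 Λ = 1) (x : H α) :
    (TensorProduct.lid k (H α))
      (TensorProduct.map (TFB lam α x) (TFS Hc α) (TFT Hc Λ α)) = x := by
  have e1 : (1 : π) = 1 * α * α⁻¹ := by simp
  have e2 : (1 : π) = 1 * (α * α⁻¹) := by simp
  have e3 : (1 : π) = 1 * 1 := (one_mul 1).symm
  have hp : (1 * α) * α⁻¹ = α * α⁻¹ := by rw [one_mul]
  have hp2 : (1 : π) * (α * α⁻¹) = 1 * 1 := by simp
  have hT : TFT Hc Λ α =
      TensorProduct.map (Lcast k H (one_mul α)) LinearMap.id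
        (Hc.Δ (1 * α) α⁻¹ (Lcast k H e1 Λ)) := by
    have h0 : Lcast k H (mul_inv_cancel α).symm Λ = Lcast k H hp (Lcast k H e1 Λ) :=
      (Lcast_Lcast e1 hp Λ).symm
    show Hc.Δ α α⁻¹ (Lcast k H (mul_inv_cancel α).symm Λ) = _
    rw [h0]
    exact Dcast_left Hc (one_mul α) hp (Lcast k H e1 Λ)
  have hco := Hc.coassoc 1 α α⁻¹ (Lcast k H e1 Λ)
  have h1 : Lcast k H (mul_assoc 1 α α⁻¹) (Lcast k H e1 Λ) = Lcast k H e2 Λ :=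
    Lcast_Lcast e1 (mul_assoc 1 α α⁻¹) Λ
  rw [h1] at hco
  have h2 : TensorProduct.map (Hc.Δ 1 α).toLinearMap LinearMap.id
        (Hc.Δ (1 * α) α⁻¹ (Lcast k H e1 Λ)) =
      (TensorProduct.assoc k (H (1 : π)) (H α) (H α⁻¹)).symm
        (TensorProduct.map LinearMap.id (Hc.Δ α α⁻¹).toLinearMap
          (Hc.Δ 1 (α * α⁻¹) (Lcast k H e2 Λ))) := by
    rw [← hco, LinearEquiv.symm_apply_apply]
  have hDe : (TensorProduct.rid k (H (1 : π)))
      (TensorProduct.map LinearMap.id (Hc.ε.toLinearMap ∘ₗ Lcast k H (mul_inv_cancel α))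
        (Hc.Δ 1 (α * α⁻¹) (Lcast k H e2 Λ))) = Λ := by
    have hsplit := TensorProduct.map_comp
      (LinearMap.id : H (1 : π) →ₗ[k] H (1 : π)) Hc.ε.toLinearMap
      (LinearMap.id : H (1 : π) →ₗ[k] H (1 : π)) (Lcast k H (mul_inv_cancel α))
    rw [LinearMap.id_comp] at hsplit
    rw [hsplit]
    have hdr : Hc.Δ 1 1 (Lcast k H hp2 (Lcast k H e2 Λ)) =
        TensorProduct.map LinearMap.id (Lcast k H (mul_inv_cancel α))
          (Hc.Δ 1 (α * α⁻¹) (Lcast k H e2 Λ)) :=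
      Dcast_right Hc (mul_inv_cancel α) hp2 (Lcast k H e2 Λ)
    rw [LinearMap.comp_apply, ← hdr]
    have h3 : Lcast k H hp2 (Lcast k H e2 Λ) = Lcast k H e3 Λ :=
      Lcast_Lcast e2 hp2 Λ
    rw [h3]
    have hcr := Hc.counit_right 1 (Lcast k H e3 Λ)
    rw [hcr, Lcast_Lcast, Lcast_eq_id]
    rfl
  have hsc2 : ∀ t : TensorProduct k (H (1 : π)) (H α),
      t * (Λ ⊗ₜ[k] (1 : H α)) =
        Λ ⊗ₜ[k] ((TensorProduct.lid k (H α))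
          (TensorProduct.map Hc.ε.toLinearMap LinearMap.id t)) := by
    intro t
    induction t using TensorProduct.induction_on with
    | zero => simp
    | tmul y z =>
        rw [Algebra.TensorProduct.tmul_mul_tmul, hΛ y, mul_one]
        simp [smul_tmul]
    | add t₁ t₂ h₁ h₂ => simp [add_mul, h₁, h₂, tmul_add]
  calc (TensorProduct.lid k (H α))
        (TensorProduct.map (TFB lam α x) (TFS Hc α) (TFT Hc Λ α))
      = TFVx Hc lam α (Hc.Δ 1 α (Lcast k H (one_mul α).symm x))
          (TensorProduct.map (Hc.Δ 1 α).toLinearMap LinearMap.id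
            (Hc.Δ (1 * α) α⁻¹ (Lcast k H e1 Λ))) := by
        rw [hT]
        exact LinearMap.congr_fun (TFhmap1 Hc lam α hlam x) _
    _ = TFK lam α (Hc.Δ 1 α (Lcast k H (one_mul α).symm x))
          ((TensorProduct.rid k (H (1 : π)))
            (TensorProduct.map LinearMap.id
              (Hc.ε.toLinearMap ∘ₗ Lcast k H (mul_inv_cancel α))
              (Hc.Δ 1 (α * α⁻¹) (Lcast k H e2 Λ)))) := by
        rw [h2]
        exact LinearMap.congr_fun (TFhmap2 Hc lam α _) _
    _ = TFK lam α (Hc.Δ 1 α (Lcast k H (one_mul α).symm x)) Λ := by rw [hDe]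
    _ = x := by
        rw [TFK_apply, hsc2]
        rw [Hc.counit_left α (Lcast k H (one_mul α).symm x)]
        rw [Lcast_Lcast, Lcast_eq_id]
        rw [TFlam1_tmul, hnorm]
        simp

theorem TFtheta [FiniteDimensional k (H α)]
    (hlam : ∀ (α β : π) (x : H (α * β)),
      (TensorProduct.lid k (H β))
          (TensorProduct.map (lam α) LinearMap.id (Hc.Δ α β x)) =
        lam (α * β) x • (1 : H β))
    (hΛ : ∀ x : H (1 : π), x * Λ = Hc.ε x • Λ)
    (hnorm : lam 1 Λ = 1) :
    (dualTensorHom k (H α) (H α))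
      (TensorProduct.map ((TFB lam α) ∘ₗ (TFS Hc α)) LinearMap.id
        ((TensorProduct.comm k (H α) (H α⁻¹)) (TFT Hc Λ α))) = LinearMap.id := by
  have hinj : Function.Injective (TFB lam α) := by
    intro y y' h
    rw [← TFJ Hc lam Λ α hlam hΛ hnorm y, ← TFJ Hc lam Λ α hlam hΛ hnorm y', h]
  have hsurj : Function.Surjective (TFB lam α) :=
    (LinearMap.injective_iff_surjective_of_finrank_eq_finrank
      Subspace.dual_finrank_eq.symm).mp hinj
  apply LinearMap.ext
  intro z
  rw [← sub_eq_zero, ← Module.forall_dual_apply_eq_zero_iff k]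
  intro ξ
  obtain ⟨y, rfl⟩ := hsurj ξ
  rw [map_sub, sub_eq_zero, LinearMap.id_apply]
  have L1 : ∀ t : TensorProduct k (H α) (H α⁻¹),
      TFB lam α y ((dualTensorHom k (H α) (H α))
        (TensorProduct.map ((TFB lam α) ∘ₗ (TFS Hc α)) LinearMap.id
          ((TensorProduct.comm k (H α) (H α⁻¹)) t)) z) =
      TFB lam α ((TensorProduct.lid k (H α))
        (TensorProduct.map (TFB lam α y) (TFS Hc α) t)) z := by
    intro t
    induction t using TensorProduct.induction_on with
    | zero => simp
    | tmul a b =>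
        simp only [comm_tmul, map_tmul, LinearMap.comp_apply, LinearMap.id_coe, id_eq,
          dualTensorHom_apply, lid_tmul, map_smul, TFB_apply, smul_mul_assoc,
          smul_eq_mul, LinearMap.smul_apply]
        ring
    | add t₁ t₂ h₁ h₂ =>
        simp only [TFB_apply] at h₁ h₂
        simp only [map_add, LinearMap.add_apply, TFB_apply, mul_add, h₁, h₂]
  rw [L1 (TFT Hc Λ α), TFJ Hc lam Λ α hlam hΛ hnorm y]

theorem TFtrace [FiniteDimensional k (H α)] (f : H α →ₗ[k] H α)
    (t : TensorProduct k (H α) (H α⁻¹)) :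
    LinearMap.trace k (H α)
        (f ∘ₗ (dualTensorHom k (H α) (H α))
          (TensorProduct.map ((TFB lam α) ∘ₗ (TFS Hc α)) LinearMap.id
            ((TensorProduct.comm k (H α) (H α⁻¹)) t))) =
      lam α ((TensorProduct.lift (LinearMap.mul k (H α)))
        ((TensorProduct.comm k (H α) (H α))
          (TensorProduct.map f (TFS Hc α) t))) := by
  have hcomp : ∀ (ξ : Module.Dual k (H α)) (a : H α),
      f ∘ₗ (dualTensorHom k (H α) (H α)) (ξ ⊗ₜ[k] a) =
        (dualTensorHom k (H α) (H α)) (ξ ⊗ₜ[k] f a) := by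
    intro ξ a
    apply LinearMap.ext
    intro v
    simp [dualTensorHom_apply]
  induction t using TensorProduct.induction_on with
  | zero => simp
  | tmul a b =>
      simp only [comm_tmul, map_tmul, LinearMap.comp_apply, LinearMap.id_coe, id_eq]
      rw [hcomp, LinearMap.trace_eq_contract_apply, contractLeft_apply]
      simp [lift.tmul]
  | add t₁ t₂ h₁ h₂ =>
      simp only [map_add, LinearMap.comp_add, h₁, h₂]

end Aux

/-- Let `H` be a finite type Hopf `π`-coalgebra, `λ = (λ_α)` a right `π`-integral for `H`
and `Λ` a left integral for `H 1` with `λ_1 Λ = 1`.  Then for every `α` and every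
`k`-linear endomorphism `f` of `H α`,
`Tr f = λ_α (S_{α⁻¹}(Λ_{(2,α⁻¹)}) * f (Λ_{(1,α)}))`. -/
theorem trace_formula (k : Type*) [Field k] (π : Type*) [Group π]
    (H : π → Type*) [∀ α, Ring (H α)] [∀ α, Algebra k (H α)]
    [∀ α, FiniteDimensional k (H α)]
    (Hc : HopfGroupCoalgebra k π H)
    (lam : ∀ α : π, H α →ₗ[k] k)
    (hlam : ∀ (α β : π) (x : H (α * β)),
      (TensorProduct.lid k (H β))
          (TensorProduct.map (lam α) LinearMap.id (Hc.Δ α β x)) =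
        lam (α * β) x • (1 : H β))
    (Λ : H (1 : π))
    (hΛ : ∀ x : H (1 : π), x * Λ = Hc.ε x • Λ)
    (hnorm : lam 1 Λ = 1) :
    ∀ (α : π) (f : H α →ₗ[k] H α),
      LinearMap.trace k (H α) f =
        lam α ((TensorProduct.lift (LinearMap.mul k (H α)))
          ((TensorProduct.comm k (H α) (H α))
            (TensorProduct.map f ((Lcast k H (inv_inv α)).comp (Hc.S α⁻¹))
              (Hc.Δ α α⁻¹ (Lcast k H (mul_inv_cancel α).symm Λ))))) := by
  intro α f
  have hθ := TFtheta Hc lam Λ α hlam hΛ hnorm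
  conv_lhs => rw [← LinearMap.comp_id f, ← hθ]
  exact TFtrace Hc lam α f (TFT Hc Λ α)
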